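/- In the block edge_pushing algorithm, at the end of the iteration at which node i is swept, the nonnull elements of the matrix W lie in the upper-left diagonal block of size n + i − 1; i.e., w_{jk} = 0 whenever j ≥ i or k ≥ i. -/

import Mathlib

open Matrix

/-- First partial derivative ∂g/∂x_j. -/
noncomputable def pd {n : ℕ} (g : (Fin n → ℝ) → ℝ) (x : Fin n → ℝ) (j : Fin n) : ℝ :=
  fderiv ℝ g x (Pi.single j 1)

/-- Second partial derivative ∂²g/∂x_j∂x_k. -/
noncomputable def H2 {n : ℕ} (g : (Fin n → ℝ) → ℝ) (x : Fin n → ℝ) (j k : Fin n) : ℝ :=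
  fderiv ℝ (fun y => fderiv ℝ g y (Pi.single k 1)) x (Pi.single j 1)


lemma fderiv_coord {m : ℕ} (a : Fin m) (y : Fin m → ℝ) :
    fderiv ℝ (fun w : Fin m → ℝ => w a) y
      = ContinuousLinearMap.proj (R := ℝ) (φ := fun _ : Fin m => ℝ) a := by
  exact (ContinuousLinearMap.proj (R := ℝ) (φ := fun _ : Fin m => ℝ) a).hasFDerivAt.fderiv

lemma pd_coord {m : ℕ} (a b : Fin m) (x : Fin m → ℝ) :
    pd (fun w : Fin m → ℝ => w a) x b = if a = b then 1 else 0 := by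
  unfold pd
  rw [fderiv_coord]
  simp [Pi.single_apply, eq_comm]

lemma H2_coord {m : ℕ} (a j k : Fin m) (x : Fin m → ℝ) :
    H2 (fun w : Fin m → ℝ => w a) x j k = 0 := by
  unfold H2
  have h : (fun y : Fin m → ℝ => fderiv ℝ (fun w : Fin m → ℝ => w a) y (Pi.single k 1))
      = fun _ => (Pi.single k 1 : Fin m → ℝ) a := by
    funext y
    rw [fderiv_coord]
    rfl
  rw [h, fderiv_fun_const]
  rfl

lemma H2_eq_snd {m : ℕ} {g : (Fin m → ℝ) → ℝ} (hg : ContDiff ℝ 2 g) (x : Fin m → ℝ)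
    (j k : Fin m) :
    H2 g x j k = fderiv ℝ (fderiv ℝ g) x (Pi.single j 1) (Pi.single k 1) := by
  have hdiff : Differentiable ℝ (fderiv ℝ g) :=
    (hg.fderiv_right (m := 1) le_rfl).differentiable one_ne_zero
  have h1 : HasFDerivAt (fderiv ℝ g) (fderiv ℝ (fderiv ℝ g) x) x := (hdiff x).hasFDerivAt
  have h2 : HasFDerivAt (fun y => fderiv ℝ g y (Pi.single k 1))
      (((fderiv ℝ g x).comp (0 : (Fin m → ℝ) →L[ℝ] (Fin m → ℝ)))
        + (fderiv ℝ (fderiv ℝ g) x).flip (Pi.single k 1)) x :=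
    h1.clm_apply (hasFDerivAt_const _ _)
  unfold H2
  rw [h2.fderiv]
  simp

lemma H2_symm {m : ℕ} {g : (Fin m → ℝ) → ℝ} (hg : ContDiff ℝ 2 g) (x : Fin m → ℝ)
    (j k : Fin m) : H2 g x j k = H2 g x k j := by
  rw [H2_eq_snd hg, H2_eq_snd hg]
  have hdiff : Differentiable ℝ (fderiv ℝ g) :=
    (hg.fderiv_right (m := 1) le_rfl).differentiable one_ne_zero
  exact second_derivative_symmetric
    (fun y => ((hg.differentiable (by norm_num)) y).hasFDerivAt)
    ((hdiff x).hasFDerivAt) _ _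

/-- zero-pattern invariant of block edge_pushing.  The state
transformation `Φ t` (the paper's Φ_{t+1}, sweeping node of index n+t) replaces
only coordinate n+t, and its elemental function φ t depends only on coordinates
of index < n+t.  After s iterations (i.e., at the end of the iteration sweeping
the paper's node i = ℓ-s+1, of index n+ℓ-s), all nonzero entries of Wseq s lie
in the upper-left block of indices < n + (ℓ - s). -/
theorem edge_pushing_zero_pattern (n ℓ : ℕ) (hℓ : 0 < ℓ)
    (Φ : ℕ → (Fin (n+ℓ) → ℝ) → (Fin (n+ℓ) → ℝ))
    (φ : ℕ → (Fin (n+ℓ) → ℝ) → ℝ)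
    (hφC : ∀ t, t < ℓ → ContDiff ℝ 2 (φ t))
    (hstruct : ∀ t, t < ℓ → ∀ w a, Φ t w a = if (a : ℕ) = n + t then φ t w else w a)
    (hdep : ∀ t, t < ℓ → ∀ m : Fin (n+ℓ), n + t ≤ (m : ℕ) →
      ∀ w, fderiv ℝ (φ t) w (Pi.single m 1) = 0)
    (lastIdx : Fin (n+ℓ)) (hlast : (lastIdx : ℕ) = n + ℓ - 1)
    (x : Fin n → ℝ)
    (Z : ℕ → (Fin n → ℝ) → (Fin (n+ℓ) → ℝ))
    (hZ0 : ∀ x t, Z 0 x t = if h : (t : ℕ) < n then x ⟨t, h⟩ else 0)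
    (hZs : ∀ i x, Z (i+1) x = Φ i (Z i x))
    (vbar : ℕ → Fin (n+ℓ) → ℝ)
    (hvℓ : vbar ℓ = Pi.single lastIdx 1)
    (hvs : ∀ t, t < ℓ → ∀ j,
      vbar t j = ∑ a, vbar (t+1) a * pd (fun w => Φ t w a) (Z t x) j)
    (Jac : ℕ → Matrix (Fin (n+ℓ)) (Fin (n+ℓ)) ℝ)
    (hJac : ∀ t a b, Jac t a b = pd (fun w => Φ t w a) (Z t x) b)
    (Hterm : ℕ → Matrix (Fin (n+ℓ)) (Fin (n+ℓ)) ℝ)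
    (hHterm : ∀ t j k, Hterm t j k
      = ∑ a, vbar (t+1) a * H2 (fun w => Φ t w a) (Z t x) j k)
    (Wseq : ℕ → Matrix (Fin (n+ℓ)) (Fin (n+ℓ)) ℝ)
    (hW0 : Wseq 0 = 0)
    (hWs : ∀ s, s < ℓ → Wseq (s+1)
      = (Jac (ℓ - s - 1))ᵀ * Wseq s * Jac (ℓ - s - 1) + Hterm (ℓ - s - 1)) :
    ∀ s, s ≤ ℓ → ∀ a b : Fin (n+ℓ),
      (n + (ℓ - s) ≤ (a : ℕ) ∨ n + (ℓ - s) ≤ (b : ℕ)) → Wseq s a b = 0 := by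
  -- Jacobian zero pattern
  have hJz : ∀ t, t < ℓ → ∀ a b : Fin (n+ℓ), n + t ≤ (b : ℕ) →
      ¬ (a = b ∧ n + t < (b : ℕ)) → Jac t a b = 0 := by
    intro t ht a b hb hnot
    rw [hJac]
    have hΦ : (fun w => Φ t w a) = (fun w => if (a : ℕ) = n + t then φ t w else w a) :=
      funext fun w => hstruct t ht w a
    rw [hΦ]
    by_cases ha : (a : ℕ) = n + t
    · simp only [if_pos ha]
      exact hdep t ht b hb (Z t x)
    · simp only [if_neg ha]
      rw [pd_coord]
      have : ¬ a = b := by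
        intro h; subst h
        exact hnot ⟨rfl, lt_of_le_of_ne hb (fun h => ha h.symm)⟩
      simp [this]
  -- second derivatives of φ vanish on high indices
  have hHφ : ∀ t, t < ℓ → ∀ j k : Fin (n+ℓ), (n + t ≤ (j:ℕ) ∨ n + t ≤ (k:ℕ)) →
      H2 (φ t) (Z t x) j k = 0 := by
    have key : ∀ t, t < ℓ → ∀ j k : Fin (n+ℓ), n + t ≤ (k:ℕ) →
        H2 (φ t) (Z t x) j k = 0 := by
      intro t ht j k hk
      unfold H2
      have h : (fun y => fderiv ℝ (φ t) y (Pi.single k 1)) = fun _ : Fin (n+ℓ) → ℝ => (0:ℝ) :=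
        funext fun y => hdep t ht k hk y
      rw [h, fderiv_fun_const]
      rfl
    intro t ht j k hjk
    rcases hjk with hj | hk
    · rw [H2_symm (hφC t ht)]
      exact key t ht k j hj
    · exact key t ht j k hk
  -- Hterm zero pattern
  have hHz : ∀ t, t < ℓ → ∀ j k : Fin (n+ℓ), (n + t ≤ (j:ℕ) ∨ n + t ≤ (k:ℕ)) →
      Hterm t j k = 0 := by
    intro t ht j k hjk
    rw [hHterm]
    apply Finset.sum_eq_zero
    intro c _
    have hΦ : (fun w => Φ t w c) = (fun w => if (c : ℕ) = n + t then φ t w else w c) :=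
      funext fun w => hstruct t ht w c
    rw [hΦ]
    by_cases hc : (c : ℕ) = n + t
    · simp only [if_pos hc]
      rw [hHφ t ht j k hjk, mul_zero]
    · simp only [if_neg hc]
      rw [H2_coord, mul_zero]
  intro s
  induction s with
  | zero => intro _ a b _; rw [hW0]; rfl
  | succ s ih =>
    intro hs1 a b hab
    have hsl : s < ℓ := hs1
    have ht : ℓ - s - 1 < ℓ := by omega
    have hts : ℓ - (s+1) = ℓ - s - 1 := by omega
    have hts' : ℓ - s = (ℓ - s - 1) + 1 := by omega
    rw [hts] at hab
    set t := ℓ - s - 1 with htdef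
    rw [hWs s hsl]
    simp only [Matrix.add_apply, Matrix.mul_apply, Matrix.transpose_apply]
    rw [hHz t ht a b hab, add_zero]
    apply Finset.sum_eq_zero
    intro d _
    rcases hab with ha | hb
    · rw [mul_eq_zero]; left
      apply Finset.sum_eq_zero
      intro c _
      by_cases h : c = a ∧ n + t < (a : ℕ)
      · rcases h with ⟨rfl, hlt⟩
        rw [ih (le_of_lt hsl) c d (Or.inl (by omega)), mul_zero]
      · rw [hJz t ht c a ha h, zero_mul]
    · by_cases h : d = b ∧ n + t < (b : ℕ)
      · rcases h with ⟨rfl, hlt⟩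
        rw [mul_eq_zero]; left
        apply Finset.sum_eq_zero
        intro c _
        rw [ih (le_of_lt hsl) c d (Or.inr (by omega)), mul_zero]
      · rw [hJz t ht d b hb h, mul_zero]
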